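/- Let X and Y be real-valued random variables with E[Y] = 0 and E[Y^2] < ∞, and let N be a standard normal random variable. Then the Kolmogorov distance satisfies d_K(X + Y, N) ≤ d_K(X, N) + (4/3)·(Var[Y])^{1/3}. -/

import Mathlib

open MeasureTheory ProbabilityTheory

/-- Kolmogorov distance between (the laws of) two real random variables. -/
noncomputable def dK {Ω : Type*} [MeasurableSpace Ω] (μ : Measure Ω) (X Y : Ω → ℝ) : ℝ :=
  ⨆ t : ℝ, |(μ {ω | X ω ≤ t}).toReal - (μ {ω | Y ω ≤ t}).toReal|

lemma gaussianPDFReal_le_half (x : ℝ) : gaussianPDFReal 0 1 x ≤ 1 / 2 := by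
  rw [gaussianPDFReal]
  have hπ : (2 : ℝ) ≤ Real.sqrt (2 * Real.pi * (1 : NNReal)) := by
    rw [show ((1 : NNReal) : ℝ) = 1 by norm_num, mul_one]
    rw [Real.le_sqrt' (by norm_num)]
    push_cast
    nlinarith [Real.pi_gt_three]
  have hexp : Real.exp (-(x - 0) ^ 2 / (2 * (1 : NNReal))) ≤ 1 := by
    apply Real.exp_le_one_iff.2
    have : (0:ℝ) ≤ (x - 0)^2 := sq_nonneg _
    have h1 : ((1 : NNReal) : ℝ) = 1 := by norm_num
    rw [h1]
    nlinarith
  have hinv : (Real.sqrt (2 * Real.pi * (1 : NNReal)))⁻¹ ≤ 1 / 2 := by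
    rw [one_div]
    exact inv_anti₀ (by norm_num) hπ
  calc (Real.sqrt (2 * Real.pi * (1 : NNReal)))⁻¹ * Real.exp (-(x - 0) ^ 2 / (2 * (1 : NNReal)))
      ≤ (Real.sqrt (2 * Real.pi * (1 : NNReal)))⁻¹ * 1 := by
        apply mul_le_mul_of_nonneg_left hexp (by positivity)
    _ ≤ 1 / 2 := by rwa [mul_one]

lemma gauss_Iic_shift {a b : ℝ} (hab : a ≤ b) :
    ((gaussianReal 0 1) (Set.Iic b)).toReal
      ≤ ((gaussianReal 0 1) (Set.Iic a)).toReal + (b - a) / 2 := by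
  have hsplit : gaussianReal 0 1 (Set.Iic b)
      = gaussianReal 0 1 (Set.Iic a) + gaussianReal 0 1 (Set.Ioc a b) := by
    rw [← measure_union (Set.Iic_disjoint_Ioc le_rfl) measurableSet_Ioc,
      Set.Iic_union_Ioc_eq_Iic hab]
  have hIoc : gaussianReal 0 1 (Set.Ioc a b) ≤ ENNReal.ofReal ((b - a) / 2) := by
    rw [gaussianReal_apply 0 one_ne_zero]
    calc ∫⁻ x in Set.Ioc a b, gaussianPDF 0 1 x
        ≤ ∫⁻ _ in Set.Ioc a b, ENNReal.ofReal (1 / 2) := by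
          refine lintegral_mono fun x => ?_
          exact ENNReal.ofReal_le_ofReal (gaussianPDFReal_le_half x)
      _ = ENNReal.ofReal (1 / 2) * volume (Set.Ioc a b) := setLIntegral_const _ _
      _ = ENNReal.ofReal (1 / 2) * ENNReal.ofReal (b - a) := by rw [Real.volume_Ioc]
      _ = ENNReal.ofReal ((b - a) / 2) := by
          rw [← ENNReal.ofReal_mul (by norm_num)]; ring_nf
  have h1 : ((gaussianReal 0 1) (Set.Ioc a b)).toReal ≤ (b - a) / 2 := by
    refine (ENNReal.toReal_mono ENNReal.ofReal_ne_top hIoc).trans ?_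
    rw [ENNReal.toReal_ofReal (by linarith)]
  rw [hsplit, ENNReal.toReal_add (measure_ne_top _ _) (measure_ne_top _ _)]
  linarith

theorem kolmogorov_add_perturbation
    {Ω : Type*} [MeasurableSpace Ω] (μ : Measure Ω) [IsProbabilityMeasure μ]
    (X Y N : Ω → ℝ)
    (hY0 : ∫ ω, Y ω ∂μ = 0) (hY2 : MemLp Y 2 μ)
    (hN : Measure.map N μ = gaussianReal 0 1) :
    dK μ (fun ω => X ω + Y ω) N ≤ dK μ X N + (4 / 3) * (variance Y μ) ^ ((1 : ℝ) / 3) := by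
  classical
  set V := variance Y μ with hV
  have hVnn : 0 ≤ V := variance_nonneg Y μ
  rcases eq_or_lt_of_le hVnn with h0 | hpos
  · -- variance zero: Y = 0 a.e.
    have hevar : evariance Y μ = 0 := by
      have hlt := hY2.evariance_lt_top
      have : (evariance Y μ).toReal = 0 := h0.symm
      exact (ENNReal.toReal_eq_zero_iff _).1 this |>.resolve_right hlt.ne
    have hYae : Y =ᵐ[μ] fun _ => 0 := by
      have := (evariance_eq_zero_iff hY2.1.aemeasurable).1 hevar
      simpa [hY0] using this
    have hset : ∀ t : ℝ, μ {ω | X ω + Y ω ≤ t} = μ {ω | X ω ≤ t} := by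
      intro t
      apply measure_congr
      filter_upwards [hYae] with ω hω
      simp only [eq_iff_iff]
      show X ω + Y ω ≤ t ↔ X ω ≤ t
      rw [hω, add_zero]
    have hdk : dK μ (fun ω => X ω + Y ω) N = dK μ X N := by
      unfold dK
      congr 1
      ext t
      rw [hset t]
    rw [hdk, ← h0]
    have : (0:ℝ) ^ ((1:ℝ)/3) = 0 := Real.zero_rpow (by norm_num)
    rw [this]
    simp
  · -- main case
    set ε : ℝ := (3 / 2) * V ^ ((1 : ℝ) / 3) with hε
    have hVr : 0 < V ^ ((1 : ℝ) / 3) := Real.rpow_pos_of_pos hpos _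
    have hεpos : 0 < ε := by positivity
    -- Chebyshev
    have hdiv : V / ε ^ 2 = (4 / 9) * V ^ ((1 : ℝ) / 3) := by
      have h23 : (V ^ ((1:ℝ)/3)) ^ 2 = V ^ ((2:ℝ)/3) := by
        rw [← Real.rpow_natCast (V ^ ((1:ℝ)/3)) 2, ← Real.rpow_mul hVnn]
        norm_num
      have hVeq : V ^ ((2:ℝ)/3) * V ^ ((1:ℝ)/3) = V := by
        rw [← Real.rpow_add hpos]; norm_num
      have h23pos : 0 < V ^ ((2:ℝ)/3) := Real.rpow_pos_of_pos hpos _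
      rw [hε, mul_pow, h23]
      rw [div_eq_iff (by positivity)]
      nlinarith [hVeq]
    have cheb : (μ {ω | ε ≤ |Y ω|}).toReal ≤ (4 / 9) * V ^ ((1 : ℝ) / 3) := by
      have h := meas_ge_le_variance_div_sq hY2 hεpos
      rw [hY0] at h
      simp only [sub_zero] at h
      refine (ENNReal.toReal_mono ENNReal.ofReal_ne_top h).trans ?_
      rw [ENNReal.toReal_ofReal (by positivity), ← hV, hdiv]
    -- Gaussian cdf
    have hNmeas : AEMeasurable N μ := by
      by_contra h
      rw [Measure.map_of_not_aemeasurable h] at hN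
      have : (0 : Measure ℝ) Set.univ = (gaussianReal 0 1) Set.univ := by rw [hN]
      simp at this
    have hmap : ∀ s : ℝ, μ {ω | N ω ≤ s} = gaussianReal 0 1 (Set.Iic s) := by
      intro s
      rw [← hN, Measure.map_apply_of_aemeasurable hNmeas measurableSet_Iic]
      rfl
    -- subadditivity helper
    have key : ∀ A B C : Set Ω, A ⊆ B ∪ C →
        (μ A).toReal ≤ (μ B).toReal + (μ C).toReal := by
      intro A B C h
      have h1 : μ A ≤ μ B + μ C := (measure_mono h).trans (measure_union_le _ _)
      have h2 := ENNReal.toReal_mono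
        (ENNReal.add_ne_top.2 ⟨measure_ne_top _ _, measure_ne_top _ _⟩) h1
      rwa [ENNReal.toReal_add (measure_ne_top _ _) (measure_ne_top _ _)] at h2
    -- bound on dK X N terms
    have hbdd : BddAbove (Set.range fun t : ℝ =>
        |(μ {ω | X ω ≤ t}).toReal - (μ {ω | N ω ≤ t}).toReal|) := by
      refine ⟨1, ?_⟩
      rintro x ⟨t, rfl⟩
      have h1 : (μ {ω | X ω ≤ t}).toReal ≤ 1 := by
        simpa using ENNReal.toReal_mono ENNReal.one_ne_top prob_le_one
      have h2 : (μ {ω | N ω ≤ t}).toReal ≤ 1 := by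
        simpa using ENNReal.toReal_mono ENNReal.one_ne_top prob_le_one
      have h3 : (0:ℝ) ≤ (μ {ω | X ω ≤ t}).toReal := ENNReal.toReal_nonneg
      have h4 : (0:ℝ) ≤ (μ {ω | N ω ≤ t}).toReal := ENNReal.toReal_nonneg
      rw [abs_sub_le_iff]
      constructor <;> linarith
    have hD : ∀ s : ℝ, |(μ {ω | X ω ≤ s}).toReal - (μ {ω | N ω ≤ s}).toReal| ≤ dK μ X N :=
      fun s => le_ciSup hbdd s
    refine ciSup_le fun t => ?_
    set Φ : ℝ → ℝ := fun s => (μ {ω | N ω ≤ s}).toReal with hΦ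
    set F : ℝ → ℝ := fun s => (μ {ω | X ω + Y ω ≤ s}).toReal with hF
    set G : ℝ → ℝ := fun s => (μ {ω | X ω ≤ s}).toReal with hG
    have hshift : ∀ a b : ℝ, a ≤ b → Φ b ≤ Φ a + (b - a) / 2 := by
      intro a b hab
      rw [hΦ]; simp only
      rw [hmap a, hmap b]
      exact gauss_Iic_shift hab
    have hup : F t - Φ t ≤ dK μ X N + (4/3) * V ^ ((1:ℝ)/3) := by
      have hsub : {ω | X ω + Y ω ≤ t} ⊆ {ω | X ω ≤ t + ε} ∪ {ω | ε ≤ |Y ω|} := by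
        intro ω hω
        simp only [Set.mem_setOf_eq] at hω
        by_cases h : X ω ≤ t + ε
        · exact Or.inl h
        · refine Or.inr ?_
          push_neg at h
          have : Y ω ≤ -ε := by linarith
          calc ε ≤ -Y ω := by linarith
            _ ≤ |Y ω| := neg_le_abs _
      have h1 : F t ≤ G (t + ε) + (4/9) * V ^ ((1:ℝ)/3) :=
        (key _ _ _ hsub).trans (by linarith [cheb])
      have h2 : G (t + ε) ≤ Φ (t + ε) + dK μ X N := by
        have := hD (t + ε)
        rw [abs_sub_le_iff] at this
        linarith [this.1]
      have h3 : Φ (t + ε) ≤ Φ t + ε / 2 := by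
        have := hshift t (t + ε) (by linarith)
        simpa using this
      have hε2 : ε / 2 = (3/4) * V ^ ((1:ℝ)/3) := by rw [hε]; ring
      rw [hε2] at h3
      linarith
    have hlo : Φ t - F t ≤ dK μ X N + (4/3) * V ^ ((1:ℝ)/3) := by
      have hsub : {ω | X ω ≤ t - ε} ⊆ {ω | X ω + Y ω ≤ t} ∪ {ω | ε ≤ |Y ω|} := by
        intro ω hω
        simp only [Set.mem_setOf_eq] at hω ⊢
        by_cases h : X ω + Y ω ≤ t
        · exact Or.inl h
        · refine Or.inr ?_
          push_neg at h
          calc ε ≤ Y ω := by linarith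
            _ ≤ |Y ω| := le_abs_self _
      have h1 : G (t - ε) ≤ F t + (4/9) * V ^ ((1:ℝ)/3) :=
        (key _ _ _ hsub).trans (by linarith [cheb])
      have h2 : Φ (t - ε) ≤ G (t - ε) + dK μ X N := by
        have := hD (t - ε)
        rw [abs_sub_le_iff] at this
        linarith [this.2]
      have h3 : Φ t ≤ Φ (t - ε) + ε / 2 := by
        have := hshift (t - ε) t (by linarith)
        have heq : t - (t - ε) = ε := by ring
        rwa [heq] at this
      have hε2 : ε / 2 = (3/4) * V ^ ((1:ℝ)/3) := by rw [hε]; ring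
      rw [hε2] at h3
      linarith
    rw [abs_sub_le_iff]
    exact ⟨hup, hlo⟩
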